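/- Let N be a normal operator on a finite-dimensional Krein space and λ ∈ σ(N) such that the indefinite inner product [·,·] is positive definite on ker(N - λ). Then ker(N - λ) = ker(N⁺ - λ̄), and both coincide with the generalized eigenspaces (root subspaces) of N at λ and of N⁺ at λ̄. -/

import Mathlib

open Filter Topology ContinuousLinearMap

noncomputable section

variable {H : Type*} [NormedAddCommGroup H] [InnerProductSpace ℂ H] [CompleteSpace H]

def kadj (J T : H →L[ℂ] H) : H →L[ℂ] H := J ∘L (ContinuousLinearMap.adjoint T) ∘L J

def ApproxEig (T : H →L[ℂ] H) (l : ℂ) (x : ℕ → H) : Prop :=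
  (∀ n, ‖x n‖ = 1) ∧ Tendsto (fun n => T (x n) - l • x n) atTop (nhds 0)

def approxSpec (T : H →L[ℂ] H) : Set ℂ := {l | ∃ x : ℕ → H, ApproxEig T l x}

def posType (J T : H →L[ℂ] H) : Set ℂ :=
  {l | l ∈ approxSpec T ∧ ∀ x : ℕ → H, ApproxEig T l x →
      0 < Filter.liminf (fun n => (inner ℂ (J (x n)) (x n) : ℂ).re) Filter.atTop}

-- auxiliary lemmas

lemma kadj_apply (J T : H →L[ℂ] H) (x : H) :
    kadj J T x = J (ContinuousLinearMap.adjoint T (J x)) := rfl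

lemma J_inv (J : H →L[ℂ] H) (hJ2 : J ∘L J = 1) (x : H) : J (J x) = x := by
  have := ContinuousLinearMap.ext_iff.mp hJ2 x
  simpa using this

lemma kadj_kadj (J T : H →L[ℂ] H) [CompleteSpace H]
    (hJ : ContinuousLinearMap.adjoint J = J) (hJ2 : J ∘L J = 1) :
    kadj J (kadj J T) = T := by
  ext x
  simp only [kadj, adjoint_comp, adjoint_adjoint, hJ, comp_apply]
  simp [J_inv J hJ2]

lemma kadj_inner (J T : H →L[ℂ] H) [CompleteSpace H]
    (hJ : ContinuousLinearMap.adjoint J = J) (hJ2 : J ∘L J = 1) (x y : H) :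
    (inner ℂ (J (T x)) y : ℂ) = inner ℂ (J x) (kadj J T y) := by
  have hJi : ∀ a b : H, (inner ℂ (J a) b : ℂ) = inner ℂ a (J b) := by
    intro a b
    conv_lhs => rw [← hJ]
    exact ContinuousLinearMap.adjoint_inner_left J b a
  calc (inner ℂ (J (T x)) y : ℂ) = inner ℂ (T x) (J y) := hJi _ _
    _ = inner ℂ x (ContinuousLinearMap.adjoint T (J y)) :=
        (ContinuousLinearMap.adjoint_inner_right T x (J y)).symm
    _ = inner ℂ (J (J x)) (ContinuousLinearMap.adjoint T (J y)) := by rw [J_inv J hJ2]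
    _ = inner ℂ (J x) (J (ContinuousLinearMap.adjoint T (J y))) := hJi _ _
    _ = inner ℂ (J x) (kadj J T y) := by rw [kadj_apply]

lemma kadj_sub_smul (J N : H →L[ℂ] H) [CompleteSpace H]
    (hJ2 : J ∘L J = 1) (l : ℂ) :
    kadj J (N - l • (1 : H →L[ℂ] H)) = kadj J N - (starRingEnd ℂ) l • (1 : H →L[ℂ] H) := by
  have hadj : ContinuousLinearMap.adjoint (N - l • (1 : H →L[ℂ] H))
      = ContinuousLinearMap.adjoint N - (starRingEnd ℂ) l • (1 : H →L[ℂ] H) := by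
    rw [← ContinuousLinearMap.star_eq_adjoint, ← ContinuousLinearMap.star_eq_adjoint,
      star_sub, star_smul, star_one]
    rfl
  ext x
  simp [kadj, hadj, J_inv J hJ2, sub_apply, smul_apply]

theorem finiteDim_posdef_ker (J N : H →L[ℂ] H) [FiniteDimensional ℂ H]
    (hJ : ContinuousLinearMap.adjoint J = J) (hJ2 : J ∘L J = 1)
    (hN : N ∘L kadj J N = kadj J N ∘L N)
    (l : ℂ) (hl : l ∈ spectrum ℂ N)
    (hpos : ∀ x : H, N x = l • x → x ≠ 0 → 0 < (inner ℂ (J x) x : ℂ).re) :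
    (∀ x : H, N x = l • x ↔ kadj J N x = (starRingEnd ℂ) l • x) ∧
      (∀ (k : ℕ) (x : H), ((N - l • (1 : H →L[ℂ] H)) ^ k) x = 0 → N x = l • x) ∧
      (∀ (k : ℕ) (x : H), ((kadj J N - (starRingEnd ℂ) l • (1 : H →L[ℂ] H)) ^ k) x = 0 →
        kadj J N x = (starRingEnd ℂ) l • x) := by
  set A : H →L[ℂ] H := N - l • 1 with hA
  set B : H →L[ℂ] H := kadj J N - (starRingEnd ℂ) l • 1 with hBdef
  have hB : B = kadj J A := (kadj_sub_smul J N hJ2 l).symm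
  have hBA : kadj J B = A := by rw [hB, kadj_kadj _ _ hJ hJ2]
  -- A and B commute
  have hcomm : A * B = B * A := by
    have h : N * kadj J N = kadj J N * N := hN
    simp only [hA, hBdef, Algebra.smul_def, mul_one]
    simp only [mul_sub, sub_mul, h]
    rw [Algebra.commutes l (kadj J N), Algebra.commutes ((starRingEnd ℂ) l) N,
      Algebra.commutes l ((algebraMap ℂ (H →L[ℂ] H)) ((starRingEnd ℂ) l))]
    abel
  have hApply : ∀ x : H, A x = N x - l • x := fun x => by
    simp [hA, sub_apply, smul_apply]
  have hAeq : ∀ x : H, A x = 0 ↔ N x = l • x := fun x => by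
    rw [hApply, sub_eq_zero]
  have hBeq : ∀ x : H, B x = 0 ↔ kadj J N x = (starRingEnd ℂ) l • x := fun x => by
    rw [hBdef]; simp [sub_apply, smul_apply, sub_eq_zero]
  -- eigenvector with zero J-inner product is zero
  have hker0 : ∀ y : H, A y = 0 → (inner ℂ (J y) y : ℂ) = 0 → y = 0 := by
    intro y hy hzero
    by_contra hne
    have := hpos y ((hAeq y).mp hy) hne
    rw [hzero] at this
    simp at this
  -- ker A ⊆ ker B
  have hAB0 : ∀ x : H, A x = 0 → B x = 0 := by
    intro x hx
    have h1 : A (B x) = 0 := by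
      have : (A * B) x = (B * A) x := by rw [hcomm]
      simp only [ContinuousLinearMap.mul_apply] at this
      rw [this, hx, map_zero]
    have h2 : (inner ℂ (J (B x)) (B x) : ℂ) = 0 := by
      rw [kadj_inner J B hJ hJ2, hBA, h1, inner_zero_right]
    exact hker0 _ h1 h2
  -- dimension argument : ker B ⊆ ker A
  have hBA0 : ∀ x : H, B x = 0 → A x = 0 := by
    have hle : LinearMap.ker (A : H →ₗ[ℂ] H) ≤ LinearMap.ker (B : H →ₗ[ℂ] H) := by
      intro x hx
      exact LinearMap.mem_ker.mpr (hAB0 x (LinearMap.mem_ker.mp hx))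
    -- J as a linear equivalence
    let eJ : H ≃ₗ[ℂ] H := LinearEquiv.ofLinear (J : H →ₗ[ℂ] H) (J : H →ₗ[ℂ] H)
      (LinearMap.ext (J_inv J hJ2)) (LinearMap.ext (J_inv J hJ2))
    have hkerB : LinearMap.ker (B : H →ₗ[ℂ] H) =
        (LinearMap.ker ((ContinuousLinearMap.adjoint A) : H →ₗ[ℂ] H)).comap (eJ : H →ₗ[ℂ] H) := by
      ext x
      simp only [LinearMap.mem_ker, Submodule.mem_comap]
      constructor
      · intro hx
        have : J (ContinuousLinearMap.adjoint A (J x)) = 0 := by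
          rw [← kadj_apply, ← hB]; exact hx
        have := congrArg J this
        rw [J_inv J hJ2, map_zero] at this
        exact this
      · intro hx
        show B x = 0
        rw [hB, kadj_apply]
        have hx' : ContinuousLinearMap.adjoint A (J x) = 0 := hx
        rw [hx', map_zero]
    have hkerAdj : LinearMap.ker ((ContinuousLinearMap.adjoint A) : H →ₗ[ℂ] H) = (LinearMap.range (A : H →ₗ[ℂ] H))ᗮ := by
      ext x
      simp only [LinearMap.mem_ker, Submodule.mem_orthogonal, ContinuousLinearMap.coe_coe]
      constructor
      · rintro hx u ⟨z, rfl⟩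
        rw [ContinuousLinearMap.coe_coe, ← ContinuousLinearMap.adjoint_inner_right A z x, hx, inner_zero_right]
      · intro h
        have h1 := h (A (ContinuousLinearMap.adjoint A x)) ⟨_, rfl⟩
        rw [← ContinuousLinearMap.adjoint_inner_right A _ x] at h1
        exact inner_self_eq_zero.mp h1
    have hdim : Module.finrank ℂ (LinearMap.ker (B : H →ₗ[ℂ] H)) ≤ Module.finrank ℂ (LinearMap.ker (A : H →ₗ[ℂ] H)) := by
      have e1 : Module.finrank ℂ (LinearMap.ker (B : H →ₗ[ℂ] H))
          = Module.finrank ℂ (LinearMap.ker ((ContinuousLinearMap.adjoint A) : H →ₗ[ℂ] H)) := by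
        rw [hkerB]
        rw [Submodule.comap_equiv_eq_map_symm]
        exact LinearEquiv.finrank_map_eq eJ.symm _
      have e2 : Module.finrank ℂ ((LinearMap.range (A : H →ₗ[ℂ] H))ᗮ : Submodule ℂ H)
          + Module.finrank ℂ (LinearMap.range (A : H →ₗ[ℂ] H)) = Module.finrank ℂ H := by
        rw [add_comm]
        exact Submodule.finrank_add_finrank_orthogonal _
      have e3 : Module.finrank ℂ (LinearMap.range (A : H →ₗ[ℂ] H))
          + Module.finrank ℂ (LinearMap.ker (A : H →ₗ[ℂ] H)) = Module.finrank ℂ H := by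
        have := LinearMap.finrank_range_add_finrank_ker (A : H →ₗ[ℂ] H)
        simpa using this
      rw [e1, hkerAdj]
      omega
    have heq : LinearMap.ker (A : H →ₗ[ℂ] H) = LinearMap.ker (B : H →ₗ[ℂ] H) :=
      Submodule.eq_of_le_of_finrank_le hle hdim
    intro x hx
    have : x ∈ LinearMap.ker (A : H →ₗ[ℂ] H) := by rw [heq]; exact LinearMap.mem_ker.mpr hx
    exact LinearMap.mem_ker.mp this
  -- squares
  have hA2 : ∀ x : H, A (A x) = 0 → A x = 0 := by
    intro x hx
    have hBAx : B (A x) = 0 := hAB0 _ hx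
    have h2 : (inner ℂ (J (A x)) (A x) : ℂ) = 0 := by
      rw [kadj_inner J A hJ hJ2, ← hB, hBAx, inner_zero_right]
    exact hker0 _ hx h2
  have hB2 : ∀ x : H, B (B x) = 0 → B x = 0 := by
    intro x hx
    have hABx : A (B x) = 0 := hBA0 _ hx
    have h2 : (inner ℂ (J (B x)) (B x) : ℂ) = 0 := by
      rw [kadj_inner J B hJ hJ2, hBA, hABx, inner_zero_right]
    exact hker0 _ hABx h2
  have powA : ∀ (k : ℕ) (x : H), (A ^ k) x = 0 → A x = 0 := by
    intro k
    induction k with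
    | zero => intro x hx; simp only [pow_zero, ContinuousLinearMap.one_apply] at hx
              rw [hx]; exact map_zero A
    | succ n ih =>
        intro x hx
        have : (A ^ n) (A x) = 0 := by
          rw [pow_succ] at hx
          simpa [ContinuousLinearMap.mul_apply] using hx
        exact hA2 x (ih _ this)
  have powB : ∀ (k : ℕ) (x : H), (B ^ k) x = 0 → B x = 0 := by
    intro k
    induction k with
    | zero => intro x hx; simp only [pow_zero, ContinuousLinearMap.one_apply] at hx
              rw [hx]; exact map_zero B
    | succ n ih =>
        intro x hx
        have : (B ^ n) (B x) = 0 := by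
          rw [pow_succ] at hx
          simpa [ContinuousLinearMap.mul_apply] using hx
        exact hB2 x (ih _ this)
  refine ⟨fun x => ?_, fun k x hx => ?_, fun k x hx => ?_⟩
  · rw [← hAeq, ← hBeq]
    exact ⟨hAB0 x, hBA0 x⟩
  · exact (hAeq x).mp (powA k x hx)
  · exact (hBeq x).mp (powB k x hx)
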